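/- Let f(n,m) denote the number of compositions of n into exactly m positive parts avoiding both substrings 22 and 212. Then the bivariate generating function Σ_{n,m} f(n,m) x^n q^m equals (1−x)(1 − xq + x²q(1 − (xq)²)) / [ (1 − x(1+q) + (1−x)x²q)(1 − xq + x²q(1 − (xq)²)) − (1−x)(1−xq)x²q ], as an identity of formal power series in x and q. -/

import Mathlib

open MvPowerSeries

namespace GFaux

def nxt : Fin 3 → ℕ → Option (Fin 3)
  | 0, a => if a = 2 then some 2 else some 0
  | 1, a => if a = 2 then none else some 0
  | 2, a => if a = 2 then none else if a = 1 then some 1 else some 0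

def Pred : Fin 3 → List ℕ → Prop
  | _, [] => True
  | i, a :: t =>
    match nxt i a with
    | Option.some j => Pred j t
    | Option.none => False

lemma pred_iff : ∀ s : List ℕ,
    (Pred 0 s ↔ (¬ [2,2] <:+: s ∧ ¬ [2,1,2] <:+: s)) ∧
    (Pred 1 s ↔ (Pred 0 s ∧ ¬ [2] <+: s)) ∧
    (Pred 2 s ↔ (Pred 0 s ∧ ¬ [2] <+: s ∧ ¬ [1,2] <+: s)) := by
  intro s
  induction s with
  | nil => simp [Pred]
  | cons a t ih =>
    obtain ⟨ih0, ih1, ih2⟩ := ih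
    by_cases ha2 : a = 2
    · subst ha2
      simp [Pred, nxt, List.infix_cons_iff, List.cons_prefix_cons, ih0, ih1, ih2]
      tauto
    · by_cases ha1 : a = 1
      · subst ha1
        simp [Pred, nxt, List.infix_cons_iff, List.cons_prefix_cons, ih0, ih1, ih2]
      · simp [Pred, nxt, List.infix_cons_iff, List.cons_prefix_cons, ih0, ih1, ih2,
          ha1, ha2]
        tauto


def cnt : Fin 3 → ℕ → ℕ → ℕ
  | _, 0, n => if n = 0 then 1 else 0
  | i, m+1, n => ∑ a ∈ Finset.Icc 1 n,
      (match nxt i a with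
       | Option.some j => cnt j m (n - a)
       | Option.none => 0)


def SetP (i : Fin 3) (m n : ℕ) : Set (List ℕ) :=
  {s | (∀ p ∈ s, 0 < p) ∧ s.sum = n ∧ s.length = m ∧ Pred i s}


def TgtSet (i : Fin 3) (a : ℕ) (m n : ℕ) : Set (List ℕ) :=
  match nxt i a with
  | Option.some j => SetP j m n
  | Option.none => ∅


lemma setP_decomp (i : Fin 3) (m n : ℕ) :
    SetP i (m+1) n = ⋃ a ∈ Finset.Icc 1 n, (List.cons a) '' TgtSet i a m (n - a) := by
  ext s
  simp only [Set.mem_iUnion, Finset.mem_Icc, Set.mem_image]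
  constructor
  · rintro ⟨hpos, hsum, hlen, hp⟩
    match s with
    | a :: t =>
      have ha : 0 < a := hpos a (by simp)
      have hsum' : a + t.sum = n := by simpa using hsum
      refine ⟨a, ⟨ha, by omega⟩, t, ?_, rfl⟩
      unfold TgtSet
      have hp' := hp
      unfold Pred at hp'
      rcases hj : nxt i a with _ | j
      · rw [hj] at hp'; exact absurd hp' (by simp)
      · rw [hj] at hp'
        exact ⟨fun p hp'' => hpos p (by simp [hp'']), by omega, by simpa using hlen, hp'⟩
  · rintro ⟨a, ⟨ha1, han⟩, t, ht, rfl⟩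
    unfold TgtSet at ht
    rcases hj : nxt i a with _ | j
    · rw [hj] at ht; exact absurd ht (by simp)
    · rw [hj] at ht
      obtain ⟨hpos, hsum, hlen, hp⟩ := ht
      refine ⟨?_, by simp [hsum]; omega, by simp [hlen], ?_⟩
      · intro p hp'
        rcases List.mem_cons.mp hp' with h | h
        · omega
        · exact hpos p h
      · unfold Pred
        rw [hj]
        exact hp


lemma ncard_biUnion {α β : Type*} (s : Finset α) (t : α → Set β)
    (hfin : ∀ a ∈ s, (t a).Finite)
    (hdisj : ∀ a ∈ s, ∀ b ∈ s, a ≠ b → Disjoint (t a) (t b)) :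
    (⋃ a ∈ s, t a).Finite ∧ (⋃ a ∈ s, t a).ncard = ∑ a ∈ s, (t a).ncard := by
  classical
  induction s using Finset.induction_on with
  | empty => simp
  | insert _ _ ha ih =>
    rename_i a s
    simp only [Finset.mem_insert] at hfin hdisj
    obtain ⟨ihf, ihc⟩ := ih (fun b hb => hfin b (Or.inr hb))
      (fun b hb c hc => hdisj b (Or.inr hb) c (Or.inr hc))
    have hU : (⋃ b ∈ insert a s, t b) = t a ∪ ⋃ b ∈ s, t b := by
      simp [Set.biUnion_insert]
    have hd : Disjoint (t a) (⋃ b ∈ s, t b) := by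
      rw [Set.disjoint_iUnion_right]
      intro b
      rw [Set.disjoint_iUnion_right]
      intro hb
      exact hdisj a (Or.inl rfl) b (Or.inr hb) (fun h => ha (h ▸ hb))
    refine ⟨hU ▸ Set.Finite.union (hfin a (Or.inl rfl)) ihf, ?_⟩
    rw [hU, Set.ncard_union_eq hd (hfin a (Or.inl rfl)) ihf, ihc,
      Finset.sum_insert ha]


lemma setP_card : ∀ (m : ℕ) (i : Fin 3) (n : ℕ),
    (SetP i m n).Finite ∧ (SetP i m n).ncard = cnt i m n := by
  intro m
  induction m with
  | zero =>
    intro i n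
    have h : SetP i 0 n = if n = 0 then {([] : List ℕ)} else ∅ := by
      ext s
      have hl : s.length = 0 ↔ s = [] := List.length_eq_zero_iff
      by_cases hn : n = 0
      · simp only [SetP, hn, if_pos rfl, Set.mem_singleton_iff, Set.mem_setOf_eq, hl]
        constructor
        · rintro ⟨-, -, rfl, -⟩; rfl
        · rintro rfl; simp [Pred]
      · rw [if_neg hn]
        simp only [SetP, Set.mem_empty_iff_false, iff_false, Set.mem_setOf_eq]
        rintro ⟨-, h1, h2, -⟩
        rw [hl] at h2
        subst h2
        simp at h1; omega
    rw [h]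
    by_cases hn : n = 0
    · subst hn
      simp [cnt]
    · simp [hn, cnt]
  | succ m ih =>
    intro i n
    have htf : ∀ a, (TgtSet i a m (n - a)).Finite := by
      intro a
      unfold TgtSet
      rcases nxt i a with _ | j
      · simp
      · exact (ih j (n - a)).1
    have hconsinj : ∀ a : ℕ, Function.Injective (List.cons a) := by
      intro a x y h
      simpa using h
    have hfin : ∀ a ∈ Finset.Icc 1 n, ((List.cons a) '' TgtSet i a m (n - a)).Finite :=
      fun a _ => (htf a).image _
    have hdisj : ∀ a ∈ Finset.Icc 1 n, ∀ b ∈ Finset.Icc 1 n, a ≠ b →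
        Disjoint ((List.cons a) '' TgtSet i a m (n - a))
          ((List.cons b) '' TgtSet i b m (n - b)) := by
      intro a _ b _ hab
      rw [Set.disjoint_left]
      rintro s ⟨x, _, rfl⟩ ⟨y, _, hy⟩
      obtain ⟨h1, -⟩ := List.cons_eq_cons.mp hy
      exact hab h1.symm
    obtain ⟨hF, hC⟩ := ncard_biUnion (Finset.Icc 1 n)
      (fun a => (List.cons a) '' TgtSet i a m (n - a)) hfin hdisj
    rw [setP_decomp]
    refine ⟨hF, ?_⟩
    rw [hC]
    show _ = cnt i (m+1) n
    unfold cnt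
    refine Finset.sum_congr rfl (fun a _ => ?_)
    rw [Set.ncard_image_of_injective _ (hconsinj a)]
    unfold TgtSet
    rcases nxt i a with _ | j
    · simp
    · exact (ih j (n - a)).2


noncomputable def mkd (n m : ℕ) : Fin 2 →₀ ℕ := Finsupp.single 0 n + Finsupp.single 1 m

@[simp] lemma mkd_zero (n m : ℕ) : mkd n m 0 = n := by
  simp [mkd, Finsupp.single_apply]

@[simp] lemma mkd_one (n m : ℕ) : mkd n m 1 = m := by
  simp [mkd, Finsupp.single_apply]

lemma eq_mkd (d : Fin 2 →₀ ℕ) : d = mkd (d 0) (d 1) := by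
  ext i
  fin_cases i <;> simp

lemma mkd_le_iff (a b n m : ℕ) : mkd a b ≤ mkd n m ↔ a ≤ n ∧ b ≤ m := by
  constructor
  · intro h
    exact ⟨by simpa using h 0, by simpa using h 1⟩
  · rintro ⟨h1, h2⟩ i
    fin_cases i <;> simpa

lemma mkd_sub (a b n m : ℕ) : mkd n m - mkd a b = mkd (n - a) (m - b) := by
  ext i
  fin_cases i <;> simp [Finsupp.tsub_apply]

lemma mkd_eq_zero (n m : ℕ) : mkd n m = 0 ↔ n = 0 ∧ m = 0 := by
  constructor
  · intro h
    exact ⟨by rw [← mkd_zero n m, h]; simp, by rw [← mkd_one n m, h]; simp⟩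
  · rintro ⟨rfl, rfl⟩
    ext i; fin_cases i <;> simp

lemma coeff_shift (a b : ℕ) (F : MvPowerSeries (Fin 2) ℚ) (n m : ℕ) :
    coeff (mkd n m) (X 0 ^ a * X 1 ^ b * F) =
      if a ≤ n ∧ b ≤ m then coeff (mkd (n - a) (m - b)) F else 0 := by
  rw [X_pow_eq, X_pow_eq, monomial_mul_monomial, one_mul]
  rw [show Finsupp.single (0 : Fin 2) a + Finsupp.single 1 b = mkd a b from rfl]
  rw [coeff_monomial_mul]
  by_cases h : a ≤ n ∧ b ≤ m
  · rw [if_pos ((mkd_le_iff a b n m).mpr h), if_pos h, one_mul, mkd_sub]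
  · rw [if_neg (fun hc => h ((mkd_le_iff a b n m).mp hc)), if_neg h]

@[simp] lemma coeff_one' (n m : ℕ) :
    coeff (mkd n m) (1 : MvPowerSeries (Fin 2) ℚ) =
      if n = 0 ∧ m = 0 then 1 else 0 := by
  classical
  rw [coeff_one]
  simp [mkd_eq_zero]

noncomputable def Us : MvPowerSeries (Fin 2) ℚ := fun d => if d 1 = 0 then 1 else 0

noncomputable def Fs (i : Fin 3) : MvPowerSeries (Fin 2) ℚ := fun d => (cnt i (d 1) (d 0) : ℚ)

lemma coeff_Us (d : Fin 2 →₀ ℕ) : coeff d Us = if d 1 = 0 then 1 else 0 := rfl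

lemma coeff_Fs (i : Fin 3) (d : Fin 2 →₀ ℕ) : coeff d (Fs i) = cnt i (d 1) (d 0) := rfl

lemma coeff_X0_mul (F : MvPowerSeries (Fin 2) ℚ) (n m : ℕ) :
    coeff (mkd n m) (X 0 * F) = if 1 ≤ n then coeff (mkd (n - 1) m) F else 0 := by
  rw [show (X 0 : MvPowerSeries (Fin 2) ℚ) * F = X 0 ^ 1 * X 1 ^ 0 * F by ring,
    coeff_shift]
  simp

lemma hU : ((1 : MvPowerSeries (Fin 2) ℚ) - X 0) * Us = 1 := by
  ext d
  rw [eq_mkd d, sub_mul, one_mul, map_sub, coeff_X0_mul, coeff_one']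
  rw [coeff_Us]
  by_cases h : d 0 = 0 <;> by_cases h' : d 1 = 0 <;>
    simp [coeff_Us, h, h', Nat.one_le_iff_ne_zero]

lemma hUrec : Us = 1 + X 0 * Us := by
  ext d
  rw [eq_mkd d, map_add, coeff_X0_mul, coeff_one', coeff_Us, coeff_Us]
  by_cases h : d 0 = 0 <;> by_cases h' : d 1 = 0 <;>
    simp [coeff_Us, h, h', Nat.one_le_iff_ne_zero]

lemma coeff_U_mul (F : MvPowerSeries (Fin 2) ℚ) (n m : ℕ) :
    coeff (mkd n m) (Us * F) = ∑ k ∈ Finset.range (n + 1), coeff (mkd k m) F := by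
  have key : Us * F = F + X 0 * (Us * F) := by
    nth_rewrite 1 [hUrec]; ring
  induction n with
  | zero =>
    rw [key, map_add, coeff_X0_mul]
    simp
  | succ n ih =>
    rw [key, map_add, coeff_X0_mul, if_pos (by omega : 1 ≤ n + 1)]
    simp only [Nat.add_sub_cancel]
    rw [ih, Finset.sum_range_succ (n := n + 1), Finset.sum_range_succ (n := n)]
    ring

lemma sum_Icc_rev (l n : ℕ) (g : ℕ → ℚ) :
    ∑ a ∈ Finset.Icc l n, g (n - a) = ∑ k ∈ Finset.range (n + 1 - l), g k := by
  apply Finset.sum_nbij' (i := fun a => n - a) (j := fun k => n - k) <;>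
    (intro a ha) <;> simp only [Finset.mem_Icc, Finset.mem_range] at * <;>
      first
        | omega
        | (congr 1; omega)



lemma cnt0_succ (m n : ℕ) : (cnt 0 (m+1) n : ℚ) =
    ∑ a ∈ Finset.Icc 1 n, (if a = 2 then (cnt 2 m (n-2) : ℚ) else (cnt 0 m (n-a) : ℚ)) := by
  show ((∑ a ∈ Finset.Icc 1 n,
      (match nxt 0 a with
       | Option.some j => cnt j m (n - a)
       | Option.none => 0) : ℕ) : ℚ) = _
  rw [Nat.cast_sum]
  refine Finset.sum_congr rfl (fun a _ => ?_)
  by_cases h : a = 2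
  · subst h; simp [nxt]
  · simp [nxt, h]

lemma cnt1_succ (m n : ℕ) : (cnt 1 (m+1) n : ℚ) =
    ∑ a ∈ Finset.Icc 1 n, (if a = 2 then 0 else (cnt 0 m (n-a) : ℚ)) := by
  show ((∑ a ∈ Finset.Icc 1 n,
      (match nxt 1 a with
       | Option.some j => cnt j m (n - a)
       | Option.none => 0) : ℕ) : ℚ) = _
  rw [Nat.cast_sum]
  refine Finset.sum_congr rfl (fun a _ => ?_)
  by_cases h : a = 2
  · subst h; simp [nxt]
  · simp [nxt, h]

lemma cnt2_succ (m n : ℕ) : (cnt 2 (m+1) n : ℚ) =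
    ∑ a ∈ Finset.Icc 1 n,
      (if a = 2 then 0 else if a = 1 then (cnt 1 m (n-1) : ℚ) else (cnt 0 m (n-a) : ℚ)) := by
  show ((∑ a ∈ Finset.Icc 1 n,
      (match nxt 2 a with
       | Option.some j => cnt j m (n - a)
       | Option.none => 0) : ℕ) : ℚ) = _
  rw [Nat.cast_sum]
  refine Finset.sum_congr rfl (fun a _ => ?_)
  by_cases h : a = 2
  · subst h; simp [nxt]
  · by_cases h1 : a = 1
    · subst h1; simp [nxt]
    · simp [nxt, h, h1]

lemma cnt_zero (i : Fin 3) (n : ℕ) : cnt i 0 n = if n = 0 then 1 else 0 := by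
  unfold cnt; rfl


lemma eq1 : Fs 0 = Fs 1 + X 0 ^ 2 * X 1 ^ 1 * Fs 2 := by
  ext d
  rw [eq_mkd d, map_add, coeff_shift, coeff_Fs, coeff_Fs]
  simp only [mkd_zero, mkd_one]
  generalize d 0 = n
  cases hm : d 1 with
  | zero =>
    rw [if_neg (by omega)]
    simp [cnt_zero]
  | succ m =>
    rw [cnt0_succ, cnt1_succ]
    have split : ∀ a ∈ Finset.Icc 1 n,
        (if a = 2 then (cnt 2 m (n-2) : ℚ) else (cnt 0 m (n-a) : ℚ)) =
        (if a = 2 then 0 else (cnt 0 m (n-a) : ℚ)) +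
          (if a = 2 then (cnt 2 m (n-2) : ℚ) else 0) := by
      intro a _; split <;> simp
    rw [Finset.sum_congr rfl split, Finset.sum_add_distrib,
      Finset.sum_ite_eq' (Finset.Icc 1 n) 2 (fun _ => (cnt 2 m (n-2) : ℚ))]
    simp only [Finset.mem_Icc, mkd_one, mkd_zero, Nat.add_sub_cancel]
    by_cases h2 : 2 ≤ n
    · rw [if_pos (by omega), if_pos ⟨h2, by omega⟩, coeff_Fs]
      simp
    · rw [if_neg (by omega), if_neg (by omega)]

lemma eq2 : Fs 1 = 1 + X 0 ^ 1 * X 1 ^ 1 * (Us * Fs 0) - X 0 ^ 2 * X 1 ^ 1 * Fs 0 := by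
  ext d
  rw [eq_mkd d, map_sub, map_add, coeff_shift, coeff_shift, coeff_Fs, coeff_one']
  simp only [mkd_zero, mkd_one]
  generalize d 0 = n
  cases hm : d 1 with
  | zero => simp [cnt_zero]
  | succ m =>
    rw [cnt1_succ]
    have split : ∀ a ∈ Finset.Icc 1 n,
        (if a = 2 then 0 else (cnt 0 m (n-a) : ℚ)) =
        (cnt 0 m (n-a) : ℚ) - (if a = 2 then (cnt 0 m (n-2) : ℚ) else 0) := by
      intro a _
      by_cases h : a = 2
      · subst h; simp
      · simp [h]
    rw [Finset.sum_congr rfl split, Finset.sum_sub_distrib,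
      Finset.sum_ite_eq' (Finset.Icc 1 n) 2 (fun _ => (cnt 0 m (n-2) : ℚ)),
      sum_Icc_rev 1 n (fun k => (cnt 0 m k : ℚ))]
    rw [if_neg (show ¬(n = 0 ∧ m + 1 = 0) by omega), zero_add]
    by_cases h1 : 1 ≤ n
    · rw [if_pos (show 1 ≤ n ∧ 1 ≤ m + 1 by omega), coeff_U_mul,
        show n + 1 - 1 = (n - 1) + 1 by omega]
      simp only [coeff_Fs, mkd_zero, mkd_one, Nat.add_sub_cancel]
      by_cases h2 : 2 ≤ n
      · rw [if_pos (show (2:ℕ) ∈ Finset.Icc 1 n by simp only [Finset.mem_Icc]; omega),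
          if_pos (show 2 ≤ n ∧ 1 ≤ m + 1 by omega)]
      · rw [if_neg (show (2:ℕ) ∉ Finset.Icc 1 n by simp only [Finset.mem_Icc]; omega),
          if_neg (show ¬(2 ≤ n ∧ 1 ≤ m + 1) by omega)]
    · have hn : n = 0 := by omega
      subst hn
      rw [if_neg (show ¬((1:ℕ) ≤ 0 ∧ 1 ≤ m + 1) by omega),
        if_neg (show ¬((2:ℕ) ≤ 0 ∧ 1 ≤ m + 1) by omega),
        if_neg (show (2:ℕ) ∉ Finset.Icc 1 0 by simp)]
      simp

lemma eq3 : Fs 2 = 1 + X 0 ^ 3 * X 1 ^ 1 * (Us * Fs 0) + X 0 ^ 1 * X 1 ^ 1 * Fs 1 := by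
  ext d
  rw [eq_mkd d, map_add, map_add, coeff_shift, coeff_shift, coeff_Fs, coeff_one']
  simp only [mkd_zero, mkd_one]
  generalize d 0 = n
  cases hm : d 1 with
  | zero => simp [cnt_zero]
  | succ m =>
    rw [cnt2_succ]
    have split : ∀ a ∈ Finset.Icc 1 n,
        (if a = 2 then 0 else if a = 1 then (cnt 1 m (n-1) : ℚ) else (cnt 0 m (n-a) : ℚ)) =
        (if a = 1 then (cnt 1 m (n-1) : ℚ) else 0) +
          (if 3 ≤ a then (cnt 0 m (n-a) : ℚ) else 0) := by
      intro a ha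
      simp only [Finset.mem_Icc] at ha
      by_cases h2 : a = 2
      · subst h2; norm_num
      · by_cases h1 : a = 1
        · subst h1; norm_num
        · rw [if_neg h2, if_neg h1, if_neg h1, if_pos (by omega : 3 ≤ a)]
          simp
    rw [Finset.sum_congr rfl split, Finset.sum_add_distrib,
      Finset.sum_ite_eq' (Finset.Icc 1 n) 1 (fun _ => (cnt 1 m (n-1) : ℚ))]
    have hsub : ∑ a ∈ Finset.Icc 1 n, (if 3 ≤ a then (cnt 0 m (n-a) : ℚ) else 0) =
        ∑ a ∈ Finset.Icc 3 n, (cnt 0 m (n-a) : ℚ) := by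
      rw [Finset.sum_ite, Finset.sum_const_zero, add_zero]
      apply Finset.sum_congr _ (fun _ _ => rfl)
      ext a
      simp only [Finset.mem_filter, Finset.mem_Icc]
      omega
    rw [hsub, sum_Icc_rev 3 n (fun k => (cnt 0 m k : ℚ))]
    rw [if_neg (show ¬(n = 0 ∧ m + 1 = 0) by omega), zero_add]
    by_cases h1 : 1 ≤ n
    · rw [if_pos (show (1:ℕ) ∈ Finset.Icc 1 n by simp only [Finset.mem_Icc]; omega),
        if_pos (show 1 ≤ n ∧ 1 ≤ m + 1 by omega)]
      simp only [coeff_Fs, mkd_zero, mkd_one, Nat.add_sub_cancel]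
      by_cases h3 : 3 ≤ n
      · rw [if_pos (show 3 ≤ n ∧ 1 ≤ m + 1 by omega), coeff_U_mul,
          show n + 1 - 3 = (n - 3) + 1 by omega]
        simp only [coeff_Fs, mkd_zero, mkd_one, Nat.add_sub_cancel]
        ring
      · rw [if_neg (show ¬(3 ≤ n ∧ 1 ≤ m + 1) by omega),
          show n + 1 - 3 = 0 by omega]
        simp only [Finset.range_zero, Finset.sum_empty]
        ring
    · have hn : n = 0 := by omega
      subst hn
      rw [if_neg (show ¬((3:ℕ) ≤ 0 ∧ 1 ≤ m + 1) by omega),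
        if_neg (show ¬((1:ℕ) ≤ 0 ∧ 1 ≤ m + 1) by omega),
        if_neg (show (1:ℕ) ∉ Finset.Icc 1 0 by simp)]
      simp



end GFaux

open GFaux in
/-- Let `f n m` be the number of compositions of `n` into exactly `m` positive parts
avoiding both substrings `22` and `212`.  The bivariate generating function
`Σ f(n,m) x^n q^m` (with `x = X 0`, `q = X 1`) equals
`(1-x)(1 - xq + x²q(1 - (xq)²)) /
 [(1 - x(1+q) + (1-x)x²q)(1 - xq + x²q(1 - (xq)²)) - (1-x)(1-xq)x²q]`;
equivalently, the product of the generating function with the denominator equals the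
numerator as formal power series. -/
theorem gf_avoid_22_212
    (f : ℕ → ℕ → ℕ)
    (hf : ∀ n m, f n m = Set.ncard {s : List ℕ | (∀ p ∈ s, 0 < p) ∧ s.sum = n ∧
      s.length = m ∧ ¬ [2, 2] <:+: s ∧ ¬ [2, 1, 2] <:+: s})
    (G : MvPowerSeries (Fin 2) ℚ)
    (hG : ∀ d : Fin 2 →₀ ℕ, MvPowerSeries.coeff d G = f (d 0) (d 1)) :
    G * ((1 - X 0 * (1 + X 1) + (1 - X 0) * X 0 ^ 2 * X 1) *
          (1 - X 0 * X 1 + X 0 ^ 2 * X 1 * (1 - (X 0 * X 1) ^ 2)) -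
        (1 - X 0) * (1 - X 0 * X 1) * X 0 ^ 2 * X 1) =
      (1 - X 0) * (1 - X 0 * X 1 + X 0 ^ 2 * X 1 * (1 - (X 0 * X 1) ^ 2)) := by
  have hG0 : G = Fs 0 := by
    ext d
    rw [hG, coeff_Fs]
    norm_cast
    rw [hf]
    have hset : {s : List ℕ | (∀ p ∈ s, 0 < p) ∧ s.sum = d 0 ∧
        s.length = d 1 ∧ ¬ [2, 2] <:+: s ∧ ¬ [2, 1, 2] <:+: s} = SetP 0 (d 1) (d 0) := by
      ext s
      have hp := (pred_iff s).1
      simp only [SetP, Set.mem_setOf_eq, hp]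
    rw [hset, (setP_card (d 1) 0 (d 0)).2]
  have e1 := eq1
  have e2 := eq2
  have e3 := eq3
  have h1 := hU
  rw [← hG0] at e1 e2 e3
  set x : MvPowerSeries (Fin 2) ℚ := X 0 with hx
  set y : MvPowerSeries (Fin 2) ℚ := X 1 with hy
  have key : ((1 - x) - x * y + (1 - x) * x^2 * y - x^5 * y^2 - x^4 * y^3
        + (1 - x) * x^5 * y^3) * G
      = (1 - x) * (1 + x^2 * y + x^3 * y^2) := by
    linear_combination (1 - x) * e1 + (1 - x) * (1 + x^3 * y^2) * e2
      + x^2 * y * (1 - x) * e3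
      + (x * y * (1 + x^3 * y^2) + x^5 * y^2) * G * h1
  have hPunit : IsUnit ((1 - x) - x * y + (1 - x) * x^2 * y - x^5 * y^2 - x^4 * y^3
      + (1 - x) * x^5 * y^3) := by
    rw [MvPowerSeries.isUnit_iff_constantCoeff]
    simp [hx, hy]
  refine hPunit.mul_left_cancel ?_
  linear_combination (((1 - x * (1 + y) + (1 - x) * x ^ 2 * y) *
          (1 - x * y + x ^ 2 * y * (1 - (x * y) ^ 2)) -
        (1 - x) * (1 - x * y) * x ^ 2 * y)) * key
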